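/- Fix n ≥ 1. The series L_n(t) = t^q/[1]^n + Σ_{j≥2} (1/[j]^n − 1/[j−1]^n) t^{q^j} converges for every t in the completion of the algebraic closure of K with |t| < q^{1/q}; in particular the series L_n, a formal difference of the polylogarithm l_n(t) = Σ_{j≥1} t^{q^j}/[j]^n at t and t^q, overconverges beyond the unit disk. -/

import Mathlib

/-- fix `n ≥ 1`. The series
`L_n(t) = t^q/[1]^n + Σ_{j≥2} (1/[j]^n - 1/[j-1]^n) t^{q^j}` (the formal difference
`l_n(t) - l_n(t^q)` of polylogarithms) converges for every `t` with `|t| < q^{1/q}`,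
so it overconverges beyond the unit disk. -/
theorem polylog_overconvergence {C : Type*} [NormedField C] [CompleteSpace C]
    (hna : IsNonarchimedean (‖·‖ : C → ℝ))
    (q : ℕ) (p m : ℕ) (hp : p.Prime) (hm : 0 < m) (hqpm : q = p ^ m) (hq : 1 < q)
    (x : C) (hx : ‖x‖ = (q : ℝ)⁻¹)
    (n : ℕ) (hn : 1 ≤ n) :
    ∀ t : C, ‖t‖ < (q : ℝ) ^ (1 / (q : ℝ)) →
      ∃ L : C, Filter.Tendsto
        (fun N : ℕ => t ^ q / (x ^ q - x) ^ n +
          ∑ j ∈ Finset.Icc 2 N,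
            (1 / (x ^ q ^ j - x) ^ n - 1 / (x ^ q ^ (j - 1) - x) ^ n) * t ^ q ^ j)
        Filter.atTop (nhds L) := by
  intro t ht
  haveI : IsUltrametricDist C :=
    IsUltrametricDist.isUltrametricDist_of_isNonarchimedean_norm hna
  have hq1 : (1 : ℝ) < (q : ℝ) := by exact_mod_cast hq
  have hq0 : (0 : ℝ) < (q : ℝ) := lt_trans one_pos hq1
  have hqi0 : (0 : ℝ) < (q : ℝ)⁻¹ := inv_pos.mpr hq0
  have hqi1 : (q : ℝ)⁻¹ < 1 := by
    rw [inv_lt_one_iff₀]; right; exact hq1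
  -- strict antitonicity of powers of q⁻¹
  have hpowlt : ∀ {a b : ℕ}, a < b → ((q : ℝ)⁻¹) ^ b < ((q : ℝ)⁻¹) ^ a :=
    fun hab => pow_lt_pow_right_of_lt_one₀ hqi0 hqi1 hab
  have hxk : ∀ k : ℕ, ‖x ^ k‖ = ((q : ℝ)⁻¹) ^ k := fun k => by rw [norm_pow, hx]
  -- norm of differences of powers of x
  have hdiff : ∀ a b : ℕ, a < b → ‖x ^ a - x ^ b‖ = ((q : ℝ)⁻¹) ^ a := by
    intro a b hab
    have hne : ‖x ^ a‖ ≠ ‖-(x ^ b)‖ := by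
      rw [norm_neg, hxk, hxk]; exact (hpowlt hab).ne'
    rw [sub_eq_add_neg, IsUltrametricDist.norm_add_eq_max_of_norm_ne_norm hne,
      norm_neg, hxk, hxk]
    exact max_eq_left (hpowlt hab).le
  -- norm of the brackets
  have hB : ∀ j : ℕ, 1 ≤ j → ‖x ^ q ^ j - x‖ = (q : ℝ)⁻¹ := by
    intro j hj
    have h1 : (1 : ℕ) < q ^ j := by
      calc (1:ℕ) < q := hq
      _ = q ^ 1 := (pow_one q).symm
      _ ≤ q ^ j := Nat.pow_le_pow_right (le_of_lt hq) hj
    have h := hdiff 1 (q ^ j) h1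
    rw [pow_one] at h
    rw [← norm_neg, neg_sub]
    simpa using h
  have hBne : ∀ j : ℕ, 1 ≤ j → x ^ q ^ j - x ≠ 0 := by
    intro j hj h0
    have := hB j hj
    rw [h0, norm_zero] at this
    exact absurd this.symm (ne_of_gt hqi0)
  have hBinv : ∀ j : ℕ, 1 ≤ j → ‖(x ^ q ^ j - x)⁻¹‖ = (q : ℝ) := by
    intro j hj
    rw [norm_inv, hB j hj, inv_inv]
  -- the coefficient bound
  have hcoef : ∀ j : ℕ, 2 ≤ j →
      ‖1 / (x ^ q ^ j - x) ^ n - 1 / (x ^ q ^ (j - 1) - x) ^ n‖ ≤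
        (q : ℝ) ^ (n + 1) * ((q : ℝ)⁻¹) ^ q ^ (j - 1) := by
    intro j hj
    have hj1 : 1 ≤ j := le_trans one_le_two hj
    have hj11 : 1 ≤ j - 1 := by omega
    set a : C := (x ^ q ^ j - x)⁻¹ with ha
    set b : C := (x ^ q ^ (j - 1) - x)⁻¹ with hb
    have key : 1 / (x ^ q ^ j - x) ^ n - 1 / (x ^ q ^ (j - 1) - x) ^ n =
        (∑ i ∈ Finset.range n, a ^ i * b ^ (n - 1 - i)) * (a - b) := by
      rw [geom_sum₂_mul, ha, hb, inv_pow, inv_pow, one_div, one_div]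
    rw [key, norm_mul]
    have hsum : ‖∑ i ∈ Finset.range n, a ^ i * b ^ (n - 1 - i)‖ ≤ (q : ℝ) ^ (n - 1) := by
      apply IsUltrametricDist.norm_sum_le_of_forall_le_of_nonneg (by positivity)
      intro i hi
      rw [Finset.mem_range] at hi
      rw [norm_mul, norm_pow, norm_pow, ha, hb, hBinv j hj1, hBinv (j - 1) hj11,
        ← pow_add]
      apply pow_le_pow_right₀ (le_of_lt hq1)
      omega
    have hab : ‖a - b‖ = ((q : ℝ)⁻¹) ^ q ^ (j - 1) * ((q : ℝ) * (q : ℝ)) := by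
      rw [ha, hb, inv_sub_inv (hBne j hj1) (hBne (j - 1) hj11)]
      have hnum : (x ^ q ^ (j - 1) - x) - (x ^ q ^ j - x) = x ^ q ^ (j - 1) - x ^ q ^ j := by
        ring
      have hlt : q ^ (j - 1) < q ^ j := Nat.pow_lt_pow_right hq (by omega)
      rw [norm_div, hnum, hdiff _ _ hlt, norm_mul, hB j hj1, hB (j - 1) hj11]
      rw [div_eq_mul_inv, mul_inv, inv_inv]
    calc ‖∑ i ∈ Finset.range n, a ^ i * b ^ (n - 1 - i)‖ * ‖a - b‖
        ≤ (q : ℝ) ^ (n - 1) * (((q : ℝ)⁻¹) ^ q ^ (j - 1) * ((q : ℝ) * (q : ℝ))) := by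
          rw [hab]
          exact mul_le_mul_of_nonneg_right hsum (by positivity)
      _ = (q : ℝ) ^ (n + 1) * ((q : ℝ)⁻¹) ^ q ^ (j - 1) := by
          have hq2 : (q:ℝ) ^ (n + 1) = (q:ℝ) ^ (n - 1) * ((q:ℝ) * (q:ℝ)) := by
            rw [← pow_two, ← pow_add]
            congr 1
            omega
          rw [hq2]
          ring
  -- the ratio r and norms of powers of t
  set Q : ℝ := (q : ℝ) ^ (1 / (q : ℝ)) with hQdef
  have hQ0 : 0 < Q := Real.rpow_pos_of_pos hq0 _
  set r : ℝ := ‖t‖ / Q with hrdef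
  have hr0 : 0 ≤ r := div_nonneg (norm_nonneg t) hQ0.le
  have hr1 : r < 1 := (div_lt_one hQ0).mpr ht
  have ht' : ‖t‖ = r * Q := by rw [hrdef, div_mul_cancel₀ _ hQ0.ne']
  have hQpow : ∀ j : ℕ, 1 ≤ j → Q ^ q ^ j = (q : ℝ) ^ q ^ (j - 1) := by
    intro j hj
    rw [hQdef, ← Real.rpow_natCast ((q : ℝ) ^ (1 / (q : ℝ))) (q ^ j),
      ← Real.rpow_mul hq0.le, ← Real.rpow_natCast (q : ℝ) (q ^ (j - 1))]
    congr 1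
    have hqj : q ^ j = q * q ^ (j - 1) := by
      conv_lhs => rw [show j = 1 + (j - 1) by omega, pow_add, pow_one]
    rw [hqj]
    push_cast
    field_simp
  -- the full term bound
  have hterm : ∀ j : ℕ, 2 ≤ j →
      ‖(1 / (x ^ q ^ j - x) ^ n - 1 / (x ^ q ^ (j - 1) - x) ^ n) * t ^ q ^ j‖ ≤
        (q : ℝ) ^ (n + 1) * r ^ q ^ j := by
    intro j hj
    have hj1 : 1 ≤ j := le_trans one_le_two hj
    rw [norm_mul, norm_pow, ht', mul_pow, hQpow j hj1]
    calc ‖1 / (x ^ q ^ j - x) ^ n - 1 / (x ^ q ^ (j - 1) - x) ^ n‖ *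
          (r ^ q ^ j * (q : ℝ) ^ q ^ (j - 1))
        ≤ ((q : ℝ) ^ (n + 1) * ((q : ℝ)⁻¹) ^ q ^ (j - 1)) *
          (r ^ q ^ j * (q : ℝ) ^ q ^ (j - 1)) := by
          exact mul_le_mul_of_nonneg_right (hcoef j hj) (by positivity)
      _ = (q : ℝ) ^ (n + 1) * r ^ q ^ j *
          (((q : ℝ)⁻¹) ^ q ^ (j - 1) * (q : ℝ) ^ q ^ (j - 1)) := by ring
      _ = (q : ℝ) ^ (n + 1) * r ^ q ^ j := by
          rw [← mul_pow, inv_mul_cancel₀ hq0.ne', one_pow, mul_one]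
  -- Cauchy sequence via geometric bound
  set S : ℕ → C := fun N => t ^ q / (x ^ q - x) ^ n +
      ∑ j ∈ Finset.Icc 2 N,
        (1 / (x ^ q ^ j - x) ^ n - 1 / (x ^ q ^ (j - 1) - x) ^ n) * t ^ q ^ j with hS
  have hcauchy : CauchySeq S := by
    apply cauchySeq_of_le_geometric r ((q : ℝ) ^ (n + 1)) hr1
    intro N
    rcases Nat.eq_zero_or_pos N with hN | hN
    · subst hN
      have h01 : Finset.Icc 2 1 = (∅ : Finset ℕ) := by decide
      have h00 : Finset.Icc 2 0 = (∅ : Finset ℕ) := by decide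
      simp only [hS, h01, h00, Finset.sum_empty]
      rw [dist_self]
      positivity
    · have hstep : S (N + 1) = S N +
          (1 / (x ^ q ^ (N + 1) - x) ^ n - 1 / (x ^ q ^ (N + 1 - 1) - x) ^ n) * t ^ q ^ (N + 1) := by
        simp only [hS]
        rw [Finset.sum_Icc_succ_top (by omega : 2 ≤ N + 1)]
        ring
      rw [dist_eq_norm, hstep]
      have : S N - (S N +
          (1 / (x ^ q ^ (N + 1) - x) ^ n - 1 / (x ^ q ^ (N + 1 - 1) - x) ^ n) * t ^ q ^ (N + 1)) =
          -((1 / (x ^ q ^ (N + 1) - x) ^ n - 1 / (x ^ q ^ (N + 1 - 1) - x) ^ n) * t ^ q ^ (N + 1)) := by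
        ring
      rw [this, norm_neg]
      calc ‖(1 / (x ^ q ^ (N + 1) - x) ^ n - 1 / (x ^ q ^ (N + 1 - 1) - x) ^ n) * t ^ q ^ (N + 1)‖
          ≤ (q : ℝ) ^ (n + 1) * r ^ q ^ (N + 1) := hterm (N + 1) (by omega)
        _ ≤ (q : ℝ) ^ (n + 1) * r ^ N := by
            apply mul_le_mul_of_nonneg_left _ (by positivity)
            apply pow_le_pow_of_le_one hr0 hr1.le
            calc N ≤ q ^ N := le_of_lt (Nat.lt_pow_self hq)
              _ ≤ q ^ (N + 1) := Nat.pow_le_pow_right (le_of_lt hq) (by omega)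
  exact cauchySeq_tendsto_of_complete hcauchy
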